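/- For every integer k ≥ 1 there exists a finite family F of bottomless rectangles, each of width 1 (i.e. r − l = 1) and containing no two rectangles forming a tower or a nested pair, such that for every colouring c : F → {1, …, k} there exist a point p ∈ ℝ² covered by at least 2·⌊(2k−1)/3⌋ rectangles of F and a colour i ∈ {1, …, k} such that no rectangle of F covering p has colour i. (Hence for unit-width bottomless rectangles m_k* ≥ 2·⌊(2k−1)/3⌋ + 1.) -/

import Mathlib

/-- A bottomless rectangle with parameters `(l, r, t)`, `l ≤ r`. -/
structure BRect where
  l : ℝ
  r : ℝ
  t : ℝ
  hlr : l ≤ r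

/-- A point `(x, y)` is covered by `(l, r, t)` iff `l ≤ x ≤ r` and `y ≤ t`. -/
def BRect.covers (R : BRect) (p : ℝ × ℝ) : Prop :=
  R.l ≤ p.1 ∧ p.1 ≤ R.r ∧ p.2 ≤ R.t

/-- Two bottomless rectangles form a tower. -/
def TowerPair (A B : BRect) : Prop :=
  (A.l < B.l ∧ B.r < A.r ∧ A.t < B.t) ∨ (B.l < A.l ∧ A.r < B.r ∧ B.t < A.t)

/-- Two bottomless rectangles form a nested pair. -/
def NestedPair (A B : BRect) : Prop :=
  (A.l < B.l ∧ B.r < A.r ∧ B.t < A.t) ∨ (B.l < A.l ∧ A.r < B.r ∧ A.t < B.t)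

noncomputable def rectA (q i : ℕ) : BRect := ⟨(i:ℝ)/(8*q), (i:ℝ)/(8*q)+1, 2, by linarith⟩
noncomputable def rectB (q i : ℕ) : BRect := ⟨1/4 + (i:ℝ)/(8*q), 1/4 + (i:ℝ)/(8*q)+1, 1, by linarith⟩
noncomputable def rectC (q i : ℕ) : BRect := ⟨1/2 + (i:ℝ)/(8*q), 1/2 + (i:ℝ)/(8*q)+1, 3, by linarith⟩

/-- Lower bound for unit-width bottomless rectangles:
`m_k^* ≥ 2⌊(2k-1)/3⌋ + 1`. There is a tower- and nested-pair-free family of unit-width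
rectangles such that every `k`-colouring leaves a `2⌊(2k-1)/3⌋`-fold covered point
missing some colour. -/
theorem unit_mk_lower_bound (k : ℕ) (hk : 1 ≤ k) :
    ∃ F : Finset BRect,
      (∀ R ∈ F, R.r - R.l = 1) ∧
      (∀ R ∈ F, ∀ R' ∈ F, ¬ TowerPair R R' ∧ ¬ NestedPair R R') ∧
      ∀ c : BRect → Fin k, ∃ p : ℝ × ℝ,
        (∃ G ⊆ F, 2 * ((2 * k - 1) / 3) ≤ G.card ∧ ∀ R ∈ G, R.covers p) ∧
        ∃ i : Fin k, ∀ R ∈ F, R.covers p → c R ≠ i := by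
  classical
  set q : ℕ := (2 * k - 1) / 3 with hq
  have hq3 : 3 * q ≤ 2 * k - 1 := by omega
  set GA : Finset BRect := (Finset.range q).image (rectA q) with hGA
  set GB : Finset BRect := (Finset.range q).image (rectB q) with hGB
  set GC : Finset BRect := (Finset.range q).image (rectC q) with hGC
  set F : Finset BRect := GA ∪ GB ∪ GC with hF
  -- basic epsilon bounds
  have heps : ∀ i : ℕ, i < q → 0 ≤ (i:ℝ)/(8*q) ∧ (i:ℝ)/(8*q) < 1/8 := by
    intro i hi
    have hqpos : (0:ℝ) < 8*q := by
      have : 0 < q := Nat.pos_of_ne_zero (by omega)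
      positivity
    constructor
    · positivity
    · rw [div_lt_iff₀ hqpos]
      have : (i:ℝ) < q := by exact_mod_cast hi
      linarith
  -- widths
  have hwidth : ∀ R ∈ F, R.r - R.l = 1 := by
    intro R hR
    simp only [hF, hGA, hGB, hGC, Finset.mem_union, Finset.mem_image,
      Finset.mem_range] at hR
    rcases hR with (⟨i, _, rfl⟩ | ⟨i, _, rfl⟩) | ⟨i, _, rfl⟩ <;>
      simp [rectA, rectB, rectC]
  refine ⟨F, hwidth, ?_, ?_⟩
  · -- no towers or nested pairs: widths are all 1
    intro R hR R' hR'
    have h1 := hwidth R hR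
    have h2 := hwidth R' hR'
    constructor
    · rintro (⟨ha, hb, _⟩ | ⟨ha, hb, _⟩) <;> linarith
    · rintro (⟨ha, hb, _⟩ | ⟨ha, hb, _⟩) <;> linarith
  intro c
  -- the three probe points
  -- coverage facts
  have covA1 : ∀ i : ℕ, i < q → (rectA q i).covers ((2:ℝ)/5, 0) := by
    intro i hi; obtain ⟨h0, h8⟩ := heps i hi
    refine ⟨?_, ?_, ?_⟩ <;> simp only [rectA] <;> norm_num <;> linarith
  have covB1 : ∀ i : ℕ, i < q → (rectB q i).covers ((2:ℝ)/5, 0) := by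
    intro i hi; obtain ⟨h0, h8⟩ := heps i hi
    refine ⟨?_, ?_, ?_⟩ <;> simp only [rectB] <;> norm_num <;> linarith
  have ncovC1 : ∀ i : ℕ, i < q → ¬ (rectC q i).covers ((2:ℝ)/5, 0) := by
    intro i hi hcov
    obtain ⟨h0, h8⟩ := heps i hi
    obtain ⟨ha, -, -⟩ := hcov
    simp only [rectC] at ha; norm_num at ha; linarith
  have covB2 : ∀ i : ℕ, i < q → (rectB q i).covers ((9:ℝ)/8, 0) := by
    intro i hi; obtain ⟨h0, h8⟩ := heps i hi
    refine ⟨?_, ?_, ?_⟩ <;> simp only [rectB] <;> norm_num <;> linarith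
  have covC2 : ∀ i : ℕ, i < q → (rectC q i).covers ((9:ℝ)/8, 0) := by
    intro i hi; obtain ⟨h0, h8⟩ := heps i hi
    refine ⟨?_, ?_, ?_⟩ <;> simp only [rectC] <;> norm_num <;> linarith
  have ncovA2 : ∀ i : ℕ, i < q → ¬ (rectA q i).covers ((9:ℝ)/8, 0) := by
    intro i hi hcov
    obtain ⟨h0, h8⟩ := heps i hi
    obtain ⟨-, hb, -⟩ := hcov
    simp only [rectA] at hb; norm_num at hb; linarith
  have covA3 : ∀ i : ℕ, i < q → (rectA q i).covers ((7:ℝ)/10, 3/2) := by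
    intro i hi; obtain ⟨h0, h8⟩ := heps i hi
    refine ⟨?_, ?_, ?_⟩ <;> simp only [rectA] <;> norm_num <;> linarith
  have covC3 : ∀ i : ℕ, i < q → (rectC q i).covers ((7:ℝ)/10, 3/2) := by
    intro i hi; obtain ⟨h0, h8⟩ := heps i hi
    refine ⟨?_, ?_, ?_⟩ <;> simp only [rectC] <;> norm_num <;> linarith
  have ncovB3 : ∀ i : ℕ, i < q → ¬ (rectB q i).covers ((7:ℝ)/10, 3/2) := by
    intro i hi hcov
    obtain ⟨-, -, hc⟩ := hcov
    simp only [rectB] at hc; norm_num at hc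
  -- cardinalities
  have hqpos' : ∀ i : ℕ, i < q → (0:ℝ) < 8*q := by
    intro i hi
    have : 0 < q := Nat.pos_of_ne_zero (by omega)
    positivity
  have hinj : ∀ i ∈ Finset.range q, ∀ j ∈ Finset.range q,
      (i:ℝ)/(8*q) = (j:ℝ)/(8*q) → i = j := by
    intro i hi j hj hij
    rw [Finset.mem_range] at hi hj
    have h8 : (8*(q:ℝ)) ≠ 0 := ne_of_gt (hqpos' i hi)
    have : (i:ℝ) = j := by
      rwa [div_left_inj' h8] at hij
    exact_mod_cast this
  have cardGA : GA.card = q := by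
    rw [hGA, Finset.card_image_of_injOn, Finset.card_range]
    intro i hi j hj hij
    exact hinj i hi j hj (congrArg BRect.l hij)
  have cardGB : GB.card = q := by
    rw [hGB, Finset.card_image_of_injOn, Finset.card_range]
    intro i hi j hj hij
    have := congrArg BRect.l hij
    simp only [rectB] at this
    exact hinj i hi j hj (by linarith)
  have cardGC : GC.card = q := by
    rw [hGC, Finset.card_image_of_injOn, Finset.card_range]
    intro i hi j hj hij
    have := congrArg BRect.l hij
    simp only [rectC] at this
    exact hinj i hi j hj (by linarith)
  -- disjointness via t-field
  have tGA : ∀ R ∈ GA, R.t = 2 := by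
    intro R hR
    simp only [hGA, Finset.mem_image, Finset.mem_range] at hR
    obtain ⟨i, -, rfl⟩ := hR; rfl
  have tGB : ∀ R ∈ GB, R.t = 1 := by
    intro R hR
    simp only [hGB, Finset.mem_image, Finset.mem_range] at hR
    obtain ⟨i, -, rfl⟩ := hR; rfl
  have tGC : ∀ R ∈ GC, R.t = 3 := by
    intro R hR
    simp only [hGC, Finset.mem_image, Finset.mem_range] at hR
    obtain ⟨i, -, rfl⟩ := hR; rfl
  have dAB : Disjoint GA GB := by
    rw [Finset.disjoint_left]
    intro R hA hB
    have ha := tGA R hA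
    have hb := tGB R hB
    rw [ha] at hb
    norm_num at hb
  have dBC : Disjoint GB GC := by
    rw [Finset.disjoint_left]
    intro R hB hC
    have ha := tGB R hB
    have hb := tGC R hC
    rw [ha] at hb
    norm_num at hb
  have dAC : Disjoint GA GC := by
    rw [Finset.disjoint_left]
    intro R hA hC
    have ha := tGA R hA
    have hb := tGC R hC
    rw [ha] at hb
    norm_num at hb
  have cardAB : (GA ∪ GB).card = 2 * q := by
    rw [Finset.card_union_of_disjoint dAB, cardGA, cardGB]; ring
  have cardBC : (GB ∪ GC).card = 2 * q := by
    rw [Finset.card_union_of_disjoint dBC, cardGB, cardGC]; ring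
  have cardAC : (GA ∪ GC).card = 2 * q := by
    rw [Finset.card_union_of_disjoint dAC, cardGA, cardGC]; ring
  -- coverage characterisations
  have memGA : ∀ R ∈ GA, ∃ i, i < q ∧ rectA q i = R := by
    intro R hR; simpa [hGA, Finset.mem_image, Finset.mem_range] using hR
  have memGB : ∀ R ∈ GB, ∃ i, i < q ∧ rectB q i = R := by
    intro R hR; simpa [hGB, Finset.mem_image, Finset.mem_range] using hR
  have memGC : ∀ R ∈ GC, ∃ i, i < q ∧ rectC q i = R := by
    intro R hR; simpa [hGC, Finset.mem_image, Finset.mem_range] using hR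
  have hcov1 : ∀ R ∈ GA ∪ GB, R.covers ((2:ℝ)/5, 0) := by
    intro R hR
    rcases Finset.mem_union.1 hR with h | h
    · obtain ⟨i, hi, rfl⟩ := memGA R h; exact covA1 i hi
    · obtain ⟨i, hi, rfl⟩ := memGB R h; exact covB1 i hi
  have hcov2 : ∀ R ∈ GB ∪ GC, R.covers ((9:ℝ)/8, 0) := by
    intro R hR
    rcases Finset.mem_union.1 hR with h | h
    · obtain ⟨i, hi, rfl⟩ := memGB R h; exact covB2 i hi
    · obtain ⟨i, hi, rfl⟩ := memGC R h; exact covC2 i hi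
  have hcov3 : ∀ R ∈ GA ∪ GC, R.covers ((7:ℝ)/10, 3/2) := by
    intro R hR
    rcases Finset.mem_union.1 hR with h | h
    · obtain ⟨i, hi, rfl⟩ := memGA R h; exact covA3 i hi
    · obtain ⟨i, hi, rfl⟩ := memGC R h; exact covC3 i hi
  have hchar1 : ∀ R ∈ F, R.covers ((2:ℝ)/5, 0) → R ∈ GA ∪ GB := by
    intro R hR hcov
    rcases Finset.mem_union.1 hR with h | h
    · exact h
    · obtain ⟨i, hi, rfl⟩ := memGC R h; exact absurd hcov (ncovC1 i hi)
  have hchar2 : ∀ R ∈ F, R.covers ((9:ℝ)/8, 0) → R ∈ GB ∪ GC := by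
    intro R hR hcov
    rcases Finset.mem_union.1 hR with h | h
    · rcases Finset.mem_union.1 h with h' | h'
      · obtain ⟨i, hi, rfl⟩ := memGA R h'; exact absurd hcov (ncovA2 i hi)
      · exact Finset.mem_union_left _ h'
    · exact Finset.mem_union_right _ h
  have hchar3 : ∀ R ∈ F, R.covers ((7:ℝ)/10, 3/2) → R ∈ GA ∪ GC := by
    intro R hR hcov
    rcases Finset.mem_union.1 hR with h | h
    · rcases Finset.mem_union.1 h with h' | h'
      · exact Finset.mem_union_left _ h'
      · obtain ⟨i, hi, rfl⟩ := memGB R h'; exact absurd hcov (ncovB3 i hi)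
    · exact Finset.mem_union_right _ h
  -- subsets of F
  have sAB : GA ∪ GB ⊆ F := Finset.subset_union_left
  have sBC : GB ∪ GC ⊆ F := by
    intro R hR
    rcases Finset.mem_union.1 hR with h | h
    · exact Finset.mem_union_left _ (Finset.mem_union_right _ h)
    · exact Finset.mem_union_right _ h
  have sAC : GA ∪ GC ⊆ F := by
    intro R hR
    rcases Finset.mem_union.1 hR with h | h
    · exact Finset.mem_union_left _ (Finset.mem_union_left _ h)
    · exact Finset.mem_union_right _ h
  -- main case analysis
  by_cases h1 : ∃ i : Fin k, ∀ R ∈ F, R.covers ((2:ℝ)/5, 0) → c R ≠ i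
  · exact ⟨((2:ℝ)/5, 0), ⟨GA ∪ GB, sAB, by rw [cardAB], hcov1⟩, h1⟩
  by_cases h2 : ∃ i : Fin k, ∀ R ∈ F, R.covers ((9:ℝ)/8, 0) → c R ≠ i
  · exact ⟨((9:ℝ)/8, 0), ⟨GB ∪ GC, sBC, by rw [cardBC], hcov2⟩, h2⟩
  by_cases h3 : ∃ i : Fin k, ∀ R ∈ F, R.covers ((7:ℝ)/10, 3/2) → c R ≠ i
  · exact ⟨((7:ℝ)/10, 3/2), ⟨GA ∪ GC, sAC, by rw [cardAC], hcov3⟩, h3⟩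
  exfalso
  push_neg at h1 h2 h3
  set SA : Finset (Fin k) := GA.image c with hSA
  set SB : Finset (Fin k) := GB.image c with hSB
  set SC : Finset (Fin k) := GC.image c with hSC
  have s12 : ∀ i : Fin k, i ∈ SA ∪ SB := by
    intro i
    obtain ⟨R, hRF, hcov, hci⟩ := h1 i
    have hmem := hchar1 R hRF hcov
    rcases Finset.mem_union.1 hmem with h | h
    · exact Finset.mem_union_left _ (Finset.mem_image.2 ⟨R, h, hci⟩)
    · exact Finset.mem_union_right _ (Finset.mem_image.2 ⟨R, h, hci⟩)
  have s23 : ∀ i : Fin k, i ∈ SB ∪ SC := by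
    intro i
    obtain ⟨R, hRF, hcov, hci⟩ := h2 i
    have hmem := hchar2 R hRF hcov
    rcases Finset.mem_union.1 hmem with h | h
    · exact Finset.mem_union_left _ (Finset.mem_image.2 ⟨R, h, hci⟩)
    · exact Finset.mem_union_right _ (Finset.mem_image.2 ⟨R, h, hci⟩)
  have s13 : ∀ i : Fin k, i ∈ SA ∪ SC := by
    intro i
    obtain ⟨R, hRF, hcov, hci⟩ := h3 i
    have hmem := hchar3 R hRF hcov
    rcases Finset.mem_union.1 hmem with h | h
    · exact Finset.mem_union_left _ (Finset.mem_image.2 ⟨R, h, hci⟩)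
    · exact Finset.mem_union_right _ (Finset.mem_image.2 ⟨R, h, hci⟩)
  have hU12 : SA ∪ SB = Finset.univ := Finset.eq_univ_of_forall s12
  have e12 : SA.card + SB.card = k + (SA ∩ SB).card := by
    rw [← Finset.card_union_add_card_inter, hU12, Finset.card_univ, Fintype.card_fin]
  have hsub : (Finset.univ : Finset (Fin k)) ⊆ (SA ∩ SB) ∪ SC := by
    intro i _
    by_cases hi : i ∈ SA ∩ SB
    · exact Finset.mem_union_left _ hi
    · rw [Finset.mem_inter] at hi
      push_neg at hi
      by_cases hiA : i ∈ SA
      · rcases Finset.mem_union.1 (s23 i) with h | h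
        · exact absurd h (hi hiA)
        · exact Finset.mem_union_right _ h
      · rcases Finset.mem_union.1 (s13 i) with h | h
        · exact absurd h hiA
        · exact Finset.mem_union_right _ h
  have hk2 : k ≤ (SA ∩ SB).card + SC.card := by
    calc k = (Finset.univ : Finset (Fin k)).card := by
            rw [Finset.card_univ, Fintype.card_fin]
      _ ≤ ((SA ∩ SB) ∪ SC).card := Finset.card_le_card hsub
      _ ≤ (SA ∩ SB).card + SC.card := Finset.card_union_le _ _
  have bSA : SA.card ≤ q := le_trans Finset.card_image_le (le_of_eq cardGA)
  have bSB : SB.card ≤ q := le_trans Finset.card_image_le (le_of_eq cardGB)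
  have bSC : SC.card ≤ q := le_trans Finset.card_image_le (le_of_eq cardGC)
  omega
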